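/- Let L be a Banach lattice with order continuous norm and P a positive finite-rank idempotent on L. Let B1 be the absolute kernel of P, B the band generated by B1 together with the range of P, B2 = B ∩ B1^d and B3 = B^d. Then with respect to L = B1 ⊕ B2 ⊕ B3, P has block matrix [[0, XQ, XQY],[0, Q, QY],[0, 0, 0]] where Q is an idempotent on B2 of the same rank as P such that both Q and Q* are strictly positive. -/

import Mathlib

open Filter Topology

section Defs
variable {L : Type*} [NormedAddCommGroup L] [Lattice L] [HasSolidNorm L] [IsOrderedAddMonoid L] [NormedSpace ℝ L]

def IsOrderIdeal (J : Submodule ℝ L) : Prop :=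
  ∀ x y : L, |x| ≤ |y| → y ∈ J → x ∈ J

def InvariantUnder (T : L →L[ℝ] L) (J : Submodule ℝ L) : Prop :=
  ∀ x ∈ J, T x ∈ J

def PositiveOp (T : L →L[ℝ] L) : Prop := ∀ x : L, 0 ≤ x → 0 ≤ T x

def IdealReducible (F : Set (L →L[ℝ] L)) : Prop :=
  ∃ J : Submodule ℝ L, IsOrderIdeal J ∧ IsClosed (J : Set L) ∧ J ≠ ⊥ ∧ J ≠ ⊤ ∧
    ∀ T ∈ F, InvariantUnder T J

def ClosedIdealChain (C : Set (Submodule ℝ L)) : Prop :=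
  IsChain (· ≤ ·) C ∧ ∀ J ∈ C, IsOrderIdeal J ∧ IsClosed (J : Set L)

def IdealTriangularizable (F : Set (L →L[ℝ] L)) : Prop :=
  ∃ C : Set (Submodule ℝ L), ClosedIdealChain C ∧
    (∀ C' : Set (Submodule ℝ L), ClosedIdealChain C' → C ⊆ C' → C' = C) ∧
    ∀ J ∈ C, ∀ T ∈ F, InvariantUnder T J

def QuasiInterior (x : L) : Prop :=
  0 ≤ x ∧ Dense {y : L | ∃ lam : ℝ, 0 ≤ lam ∧ |y| ≤ lam • x}

def StrictlyPosFunctional (φ : L →L[ℝ] ℝ) : Prop :=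
  (∀ x : L, 0 ≤ x → 0 ≤ φ x) ∧ ∀ x : L, 0 ≤ x → x ≠ 0 → 0 < φ x

def StrictlyPosOp (T : L →L[ℝ] L) : Prop :=
  PositiveOp T ∧ ∀ x : L, T |x| = 0 → x = 0

def AdjointStrictlyPos (T : L →L[ℝ] L) : Prop :=
  ∀ ψ : L →L[ℝ] ℝ, (∀ x : L, 0 ≤ x → 0 ≤ ψ x) → ψ.comp T = 0 → ψ = 0

def IsLatAtom (a : L) : Prop :=
  0 ≤ a ∧ a ≠ 0 ∧ ∀ x : L, 0 ≤ x → x ≤ a → ∃ lam : ℝ, 0 ≤ lam ∧ x = lam • a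

def Quasinilpotent (T : L →L[ℝ] L) : Prop :=
  Tendsto (fun n : ℕ => ‖T ^ n‖ ^ ((1:ℝ) / n)) atTop (𝓝 0)

def PowerCompact (T : L →L[ℝ] L) : Prop :=
  ∃ k : ℕ, 0 < k ∧ IsCompactOperator (T ^ k : L →L[ℝ] L)

def OpLE (S T : L →L[ℝ] L) : Prop := ∀ x : L, 0 ≤ x → S x ≤ T x

def IsBand (B : Submodule ℝ L) : Prop :=
  IsOrderIdeal B ∧ ∀ A : Set L, A.Nonempty → A ⊆ B → ∀ x : L, IsLUB A x → x ∈ B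

def IsBandProjection (P : L →L[ℝ] L) (B : Submodule ℝ L) : Prop :=
  PositiveOp P ∧ P.comp P = P ∧ (∀ x : L, P x ∈ B) ∧ (∀ x ∈ B, P x = x) ∧
    ∀ x : L, ∀ b ∈ B, |x - P x| ⊓ |b| = 0

def IsAtomicBand (B : Submodule ℝ L) : Prop :=
  IsBand B ∧ (∀ a : L, IsLatAtom a → a ∈ B) ∧
    ∀ B' : Submodule ℝ L, IsBand B' → (∀ a : L, IsLatAtom a → a ∈ B') → B ≤ B'

def DedekindComplete (L : Type*) [NormedAddCommGroup L] [Lattice L] [HasSolidNorm L] [IsOrderedAddMonoid L] : Prop :=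
  ∀ A : Set L, A.Nonempty → BddAbove A → ∃ x : L, IsLUB A x

def OrderContinuousNorm (L : Type*) [NormedAddCommGroup L] [Lattice L] [HasSolidNorm L] [IsOrderedAddMonoid L] : Prop :=
  ∀ A : Set L, A.Nonempty → DirectedOn (· ≥ ·) A → IsGLB A 0 →
    ∀ ε : ℝ, 0 < ε → ∃ a ∈ A, ‖a‖ < ε

def MaxAtomFamily (𝒜 : Set L) : Prop :=
  (∀ a ∈ 𝒜, IsLatAtom a ∧ ‖a‖ = 1) ∧
  (∀ a ∈ 𝒜, ∀ b ∈ 𝒜, a ≠ b → a ⊓ b = 0) ∧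
  ∀ c : L, IsLatAtom c → ∃ a ∈ 𝒜, ¬ (c ⊓ a = 0)

def AtomicDiagOf (𝒜 : Set L) (Pa : L → (L →L[ℝ] L)) (T D : L →L[ℝ] L) : Prop :=
  (∀ F : Finset L, ↑F ⊆ 𝒜 → OpLE (∑ a ∈ F, (Pa a).comp (T.comp (Pa a))) D) ∧
  ∀ U : L →L[ℝ] L,
    (∀ F : Finset L, ↑F ⊆ 𝒜 → OpLE (∑ a ∈ F, (Pa a).comp (T.comp (Pa a))) U) → OpLE D U

def SchepSet (T : L →L[ℝ] L) : Set (L →L[ℝ] L) :=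
  {S | ∃ (m : ℕ) (P : Fin m → (L →L[ℝ] L)) (B : Fin m → Submodule ℝ L),
    (∀ i, IsBand (B i) ∧ IsBandProjection (P i) (B i)) ∧ (∑ i, P i = 1) ∧
    S = ∑ i, (P i).comp (T.comp (P i))}

def CentralPartOf (T PT : L →L[ℝ] L) : Prop :=
  PositiveOp PT ∧ (∀ S ∈ SchepSet T, OpLE PT S) ∧
    ∀ U : L →L[ℝ] L, PositiveOp U → (∀ S ∈ SchepSet T, OpLE U S) → OpLE U PT

end Defs


section Helpers
variable {L : Type*} [NormedAddCommGroup L] [Lattice L] [HasSolidNorm L] [IsOrderedAddMonoid L] [NormedSpace ℝ L]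

set_option linter.unusedSectionVars false

lemma my_inf_add_le {a b c : L} (ha : 0 ≤ a) (hb : 0 ≤ b) (hc : 0 ≤ c) :
    (a + b) ⊓ c ≤ a ⊓ c + b ⊓ c := by
  have h : a ⊓ c + b ⊓ c = ((a + b) ⊓ (a + c)) ⊓ ((c + b) ⊓ (c + c)) := by
    rw [inf_add, add_inf, add_inf]
  rw [h]
  refine le_inf (le_inf inf_le_left ?_) (le_inf ?_ ?_)
  · exact inf_le_right.trans (le_add_of_nonneg_left ha)
  · exact inf_le_right.trans (le_add_of_nonneg_right hb)
  · exact inf_le_right.trans (le_add_of_nonneg_left hc)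

lemma my_disjoint_add {a b c : L} (ha : 0 ≤ a) (hb : 0 ≤ b) (hc : 0 ≤ c)
    (h1 : a ⊓ c = 0) (h2 : b ⊓ c = 0) : (a + b) ⊓ c = 0 :=
  le_antisymm (by simpa [h1, h2] using my_inf_add_le ha hb hc)
    (le_inf (add_nonneg ha hb) hc)

lemma my_disjoint_nsmul {a c : L} (ha : 0 ≤ a) (hc : 0 ≤ c)
    (h : a ⊓ c = 0) : ∀ n : ℕ, (n • a) ⊓ c = 0 := by
  intro n
  induction n with
  | zero => simpa using inf_eq_left.2 hc
  | succ n ih => rw [succ_nsmul]; exact my_disjoint_add (nsmul_nonneg ha n) ha hc ih h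

lemma my_semiclosed {y : L} {n : ℕ} (hn : 0 < n) (h : 0 ≤ n • y) : 0 ≤ y := by
  have hd : y⁺ ⊓ y⁻ = 0 := posPart_inf_negPart_eq_zero y
  have h1 : n • y⁻ ≤ n • y⁺ := by
    have := posPart_sub_negPart y
    have h2 : n • (y⁺ - y⁻) = n • y⁺ - n • y⁻ := smul_sub _ _ _
    rw [← this, h2, sub_nonneg] at h
    exact h
  have hle : y⁻ ≤ n • y⁺ := by
    refine le_trans ?_ h1
    obtain ⟨m, rfl⟩ := Nat.exists_eq_succ_of_ne_zero hn.ne'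
    rw [succ_nsmul]
    exact le_add_of_nonneg_left (nsmul_nonneg (negPart_nonneg y) m)
  have : (n • y⁺) ⊓ y⁻ = 0 := my_disjoint_nsmul (posPart_nonneg y) (negPart_nonneg y) hd n
  have hy0 : y⁻ = 0 := by
    have := inf_eq_right.2 hle
    rw [this] at ‹(n • y⁺) ⊓ y⁻ = 0›
    exact ‹y⁻ = 0›
  have := posPart_sub_negPart y
  rw [hy0, sub_zero] at this
  rw [← this]
  exact posPart_nonneg y

lemma my_smul_nonneg {c : ℝ} {x : L} (hc : 0 ≤ c) (hx : 0 ≤ x) : 0 ≤ c • x := by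
  have hratpos : ∀ q : ℚ, 0 ≤ q → 0 ≤ (q : ℝ) • x := by
    intro q hq
    have hden : (q.den : ℝ) • ((q : ℝ) • x) = (q.num : ℝ) • x := by
      rw [smul_smul, ← Rat.cast_natCast, ← Rat.cast_mul, Rat.den_mul_eq_num, Rat.cast_intCast]
    have hnum : 0 ≤ (q.num : ℝ) • x := by
      rw [Int.cast_smul_eq_zsmul]
      lift q.num to ℕ using (Rat.num_nonneg.2 hq) with m hm
      rw [natCast_zsmul]
      exact nsmul_nonneg hx m
    refine my_semiclosed (n := q.den) q.pos ?_
    rw [show (q.den : ℕ) • ((q:ℝ) • x) = (q.den:ℝ) • ((q:ℝ) • x) from Nat.cast_smul_eq_nsmul ℝ _ _ |>.symm, hden]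
    exact hnum
  -- approximate c from above by rationals
  have hseq : ∀ n : ℕ, ∃ q : ℚ, c < (q:ℝ) ∧ (q:ℝ) < c + 1/(n+1) := by
    intro n
    exact exists_rat_btwn (lt_add_of_pos_right c (by positivity))
  choose q hq1 hq2 using hseq
  have htend : Filter.Tendsto (fun n : ℕ => ((q n : ℝ))) Filter.atTop (nhds c) := by
    have h1 : Filter.Tendsto (fun n : ℕ => c + 1/((n:ℝ)+1)) Filter.atTop (nhds (c + 0)) :=
      Filter.Tendsto.const_add c tendsto_one_div_add_atTop_nhds_zero_nat
    rw [add_zero] at h1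
    exact tendsto_of_tendsto_of_tendsto_of_le_of_le tendsto_const_nhds h1
      (fun n => (hq1 n).le) (fun n => (hq2 n).le)
  have htendS : Filter.Tendsto (fun n : ℕ => ((q n : ℝ)) • x) Filter.atTop (nhds (c • x)) :=
    htend.smul_const x
  exact isClosed_nonneg.mem_of_tendsto htendS
    (Filter.Eventually.of_forall fun n => hratpos (q n) (by exact_mod_cast (hc.trans (hq1 n).le)))

lemma my_smul_mono {c : ℝ} (hc : 0 ≤ c) {a b : L} (hab : a ≤ b) : c • a ≤ c • b := by
  have := my_smul_nonneg hc (sub_nonneg.2 hab)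
  rwa [smul_sub, sub_nonneg] at this

lemma my_smul_sup {c : ℝ} (hc : 0 ≤ c) (a b : L) : c • (a ⊔ b) = (c • a) ⊔ (c • b) := by
  rcases eq_or_lt_of_le hc with h | h
  · simp [← h]
  refine le_antisymm ?_ (sup_le (my_smul_mono hc le_sup_left) (my_smul_mono hc le_sup_right))
  have key : a ⊔ b ≤ c⁻¹ • ((c • a) ⊔ (c • b)) := by
    refine sup_le ?_ ?_
    · have := my_smul_mono (le_of_lt (inv_pos.2 h)) (le_sup_left (a := c • a) (b := c • b))
      rwa [smul_smul, inv_mul_cancel₀ h.ne', one_smul] at this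
    · have := my_smul_mono (le_of_lt (inv_pos.2 h)) (le_sup_right (a := c • a) (b := c • b))
      rwa [smul_smul, inv_mul_cancel₀ h.ne', one_smul] at this
  have := my_smul_mono hc key
  rwa [smul_smul, mul_inv_cancel₀ h.ne', one_smul] at this

lemma my_abs_smul (c : ℝ) (z : L) : |c • z| = |c| • |z| := by
  have habs : ∀ d : ℝ, 0 ≤ d → ∀ w : L, |d • w| = d • |w| := by
    intro d hd w
    have : |d • w| = (d • w) ⊔ (-(d • w)) := rfl
    rw [this, ← smul_neg, ← my_smul_sup hd]
    rfl
  rcases le_or_gt 0 c with h | h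
  · rw [habs c h z, abs_of_nonneg h]
  · have h1 : c • z = (-c) • (-z) := by rw [neg_smul, smul_neg, neg_neg]
    rw [h1, habs (-c) (by linarith) (-z), abs_neg, abs_of_neg h]

lemma my_abs_sup_le (a b : L) : |a ⊔ b| ≤ |a| + |b| := by
  have h1 : a ⊔ b ≤ |a| + |b| :=
    sup_le ((le_abs_self a).trans (le_add_of_nonneg_right (abs_nonneg b)))
      ((le_abs_self b).trans (le_add_of_nonneg_left (abs_nonneg a)))
  have h2 : -(a ⊔ b) ≤ |a| + |b| := by
    rw [neg_sup]
    exact inf_le_left.trans ((neg_le_abs a).trans (le_add_of_nonneg_right (abs_nonneg b)))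
  exact sup_le h1 h2

lemma my_sup_mem_closed_ideal (J : Submodule ℝ L) (hoc : OrderContinuousNorm L)
    (hideal : ∀ x y : L, |x| ≤ |y| → y ∈ J → x ∈ J) (hclosed : IsClosed (J : Set L))
    (A : Set L) (hne : A.Nonempty) (hAJ : A ⊆ (J : Set L)) (x : L) (hx : IsLUB A x) :
    x ∈ J := by
  have habsJ : ∀ a : L, a ∈ J → |a| ∈ J := fun a ha => hideal _ a (by rw [abs_abs]) ha
  have hsup : ∀ a b : L, a ∈ J → b ∈ J → a ⊔ b ∈ J := by
    intro a b ha hb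
    refine hideal _ (|a| + |b|) ?_ (J.add_mem (habsJ a ha) (habsJ b hb))
    rw [abs_of_nonneg (add_nonneg (abs_nonneg a) (abs_nonneg b))]
    exact my_abs_sup_le a b
  -- the set of finite suprema of A
  set A' : Set L := {s | ∃ (F : Finset L) (hF : F.Nonempty), ↑F ⊆ A ∧ s = F.sup' hF id} with hA'
  obtain ⟨a₀, ha₀⟩ := hne
  have ha₀' : a₀ ∈ A' := ⟨{a₀}, Finset.singleton_nonempty a₀, by simpa using ha₀, by simp⟩
  have hA'ne : A'.Nonempty := ⟨a₀, ha₀'⟩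
  have hA'J : A' ⊆ (J : Set L) := by
    rintro s ⟨F, hF, hFA, rfl⟩
    exact Finset.sup'_mem (J : Set L) (fun u hu v hv => hsup u v hu hv) F hF id
      (fun i hi => hAJ (hFA hi))
  have hA'ub : ∀ s ∈ A', s ≤ x := by
    rintro s ⟨F, hF, hFA, rfl⟩
    exact Finset.sup'_le hF id fun i hi => hx.1 (hFA hi)
  have hA'lub : IsLUB A' x := by
    refine ⟨fun s hs => hA'ub s hs, fun u hu => hx.2 fun a ha => ?_⟩
    exact hu ⟨{a}, Finset.singleton_nonempty a, by simpa using ha, by simp⟩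
  -- the downward directed set x - A'
  set D : Set L := (fun s => x - s) '' A' with hD
  have hDdir : DirectedOn (· ≥ ·) D := by
    rintro _ ⟨s, ⟨F, hF, hFA, rfl⟩, rfl⟩ _ ⟨t, ⟨G, hG, hGA, rfl⟩, rfl⟩
    classical
    refine ⟨x - (F ∪ G).sup' (hF.mono Finset.subset_union_left) id,
      ⟨_, ⟨F ∪ G, hF.mono Finset.subset_union_left, ?_, rfl⟩, rfl⟩, ?_, ?_⟩
    · rw [Finset.coe_union]; exact Set.union_subset hFA hGA
    · rw [Finset.sup'_union hF hG id]
      exact sub_le_sub_left le_sup_left x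
    · rw [Finset.sup'_union hF hG id]
      exact sub_le_sub_left le_sup_right x
  have hDglb : IsGLB D 0 := by
    constructor
    · rintro _ ⟨s, hs, rfl⟩
      exact sub_nonneg.2 (hA'ub s hs)
    · intro c hc
      have hub : x - c ∈ upperBounds A' := by
        intro s hs
        have h := hc ⟨s, hs, rfl⟩
        rwa [le_sub_comm] at h
      have hxc := hA'lub.2 hub
      rwa [le_sub_iff_add_le, add_le_iff_nonpos_right] at hxc
  -- x is in the closure of J
  have hxcl : x ∈ closure (J : Set L) := by
    rw [Metric.mem_closure_iff]
    intro ε hε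
    obtain ⟨d, ⟨s, hs, rfl⟩, hd⟩ := hoc D ⟨x - a₀, ⟨a₀, ha₀', rfl⟩⟩ hDdir hDglb ε hε
    exact ⟨s, hA'J hs, by rwa [dist_eq_norm]⟩
  rwa [hclosed.closure_eq] at hxcl


lemma my_disj_vanish {u z : L} (h1 : |u| ⊓ |z| = 0) (h2 : |z - u| ⊓ |u| = 0) : u = 0 := by
  have hrw : u = z - (z - u) := by abel
  have hle : |u| ≤ |z| + |z - u| := by
    calc |u| = |z - (z - u)| := by rw [← hrw]
    _ = |z + -(z - u)| := by rw [sub_eq_add_neg]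
    _ ≤ |z| + |-(z - u)| := abs_add_le _ _
    _ = |z| + |z - u| := by rw [abs_neg]
  have h3 : |u| ≤ (|z| + |z - u|) ⊓ |u| := le_inf hle le_rfl
  have h4 : (|z| + |z - u|) ⊓ |u| ≤ |z| ⊓ |u| + |z - u| ⊓ |u| :=
    my_inf_add_le (abs_nonneg z) (abs_nonneg (z - u)) (abs_nonneg u)
  rw [inf_comm (|u|) (|z|)] at h1
  rw [h1, h2, add_zero] at h4
  have h0 : |u| = 0 := le_antisymm (h3.trans h4) (abs_nonneg u)
  have hu1 : u ≤ 0 := by rw [← h0]; exact le_abs_self u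
  have hu2 : -u ≤ 0 := by
    have h : -u ≤ |u| := le_sup_right
    rwa [h0] at h
  exact le_antisymm hu1 (neg_nonpos.1 hu2)

lemma my_op_mono {T : L →L[ℝ] L} (hT : PositiveOp T) {u v : L} (huv : u ≤ v) : T u ≤ T v := by
  have := hT _ (sub_nonneg.2 huv)
  rwa [map_sub, sub_nonneg] at this

lemma my_abs_op_le {T : L →L[ℝ] L} (hT : PositiveOp T) (z : L) : |T z| ≤ T |z| := by
  have hneg : -|z| ≤ z := by
    have h : -z ≤ |z| := le_sup_right
    have h' := neg_le_neg h
    rwa [neg_neg] at h'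
  have h2 : T (-|z|) ≤ T z := my_op_mono hT hneg
  rw [map_neg] at h2
  have h2' : -(T z) ≤ T |z| := by
    have := neg_le_neg h2
    rwa [neg_neg] at this
  exact sup_le (my_op_mono hT (le_abs_self z)) h2' 

lemma my_abs_eq_zero' {u : L} (h : |u| = 0) : u = 0 := by
  have hu1 : u ≤ 0 := by rw [← h]; exact le_abs_self u
  have hu2 : -u ≤ 0 := by
    have h' : -u ≤ |u| := le_sup_right
    rwa [h] at h'
  exact le_antisymm hu1 (neg_nonpos.1 hu2)

end Helpers

theorem stmt10 {L : Type*} [NormedAddCommGroup L] [Lattice L] [HasSolidNorm L] [IsOrderedAddMonoid L] [NormedSpace ℝ L]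
    [CompleteSpace L] (hoc : OrderContinuousNorm L)
    (P : L →L[ℝ] L) (hP : PositiveOp P) (hidem : P.comp P = P)
    (r : ℕ) (hfd : FiniteDimensional ℝ ↥(LinearMap.range (P : L →ₗ[ℝ] L)))
    (hr : Module.finrank ℝ ↥(LinearMap.range (P : L →ₗ[ℝ] L)) = r)
    -- B1 is the absolute kernel of P:
    (B1 : Submodule ℝ L) (hB1 : ∀ x : L, x ∈ B1 ↔ P |x| = 0)
    -- B is the band generated by B1 together with the range of P:
    (B : Submodule ℝ L) (hB : IsBand B ∧ B1 ≤ B ∧ (∀ x : L, P x ∈ B) ∧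
      ∀ B' : Submodule ℝ L, IsBand B' → B1 ≤ B' → (∀ x : L, P x ∈ B') → B ≤ B')
    -- B2 = B ∩ B1ᵈ and B3 = Bᵈ:
    (B2 : Submodule ℝ L) (hB2 : ∀ x : L, x ∈ B2 ↔ x ∈ B ∧ ∀ y ∈ B1, |x| ⊓ |y| = 0)
    (B3 : Submodule ℝ L) (hB3 : ∀ x : L, x ∈ B3 ↔ ∀ y ∈ B, |x| ⊓ |y| = 0)
    (P1 P2 P3 : L →L[ℝ] L) (hP1 : IsBandProjection P1 B1)
    (hP2 : IsBandProjection P2 B2) (hP3 : IsBandProjection P3 B3)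
    (hsum : P1 + P2 + P3 = 1) :
    -- with Q the middle compression of P, the block matrix of P is
    -- [[0, XQ, XQY], [0, Q, QY], [0, 0, 0]]:
    ∀ Q : L →L[ℝ] L, Q = P2.comp (P.comp P2) →
      P.comp P1 = 0 ∧ P3.comp P = 0 ∧
      Q.comp Q = Q ∧
      (P1.comp (P.comp P2)) = (P1.comp (P.comp P2)).comp Q ∧
      (P2.comp (P.comp P3)) = Q.comp (P2.comp (P.comp P3)) ∧
      (P1.comp (P.comp P3)) = (P1.comp (P.comp P2)).comp (P2.comp (P.comp P3)) ∧
      Module.finrank ℝ ↥(LinearMap.range (Q : L →ₗ[ℝ] L)) = r ∧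
      (∀ x ∈ B2, Q |x| = 0 → x = 0) ∧
      ∀ φ : L →L[ℝ] ℝ, (∀ x : L, 0 ≤ x → 0 ≤ φ x) → (∀ x : L, φ (Q x) = 0) →
        ∀ x ∈ B2, φ x = 0 := by
  intro Q hQ
  -- pointwise versions of operator identities
  have split : ∀ w : L, P1 w + P2 w + P3 w = w := by
    intro w
    have h := congrArg (fun T : L →L[ℝ] L => T w) hsum
    simpa using h
  have hidem' : ∀ w : L, P (P w) = P w := by
    intro w
    have h := congrArg (fun T : L →L[ℝ] L => T w) hidem
    simpa using h
  have hP2idem : ∀ w : L, P2 (P2 w) = P2 w := by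
    intro w
    have h := congrArg (fun T : L →L[ℝ] L => T w) hP2.2.1
    simpa using h
  -- P vanishes on B1
  have key1 : ∀ y ∈ B1, P y = 0 := by
    intro y hy
    have h0 : P |y| = 0 := (hB1 y).1 hy
    have h1 : P y ≤ 0 := by
      have := my_op_mono hP (le_abs_self y)
      rwa [h0] at this
    have h2 : 0 ≤ P y := by
      have hneg : -|y| ≤ y := by
        have h : -y ≤ |y| := le_sup_right
        have h' := neg_le_neg h
        rwa [neg_neg] at h'
      have := my_op_mono hP hneg
      rwa [map_neg, h0, neg_zero] at this
    exact le_antisymm h1 h2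
  have hPP1 : P.comp P1 = 0 := by
    ext w
    simpa using key1 (P1 w) (hP1.2.2.1 w)
  -- P3 vanishes on B
  have key2 : ∀ z ∈ B, P3 z = 0 := by
    intro z hz
    have hu : P3 z ∈ B3 := hP3.2.2.1 z
    have h1 : |P3 z| ⊓ |z| = 0 := (hB3 (P3 z)).1 hu z hz
    have h2 : |z - P3 z| ⊓ |P3 z| = 0 := hP3.2.2.2.2 z (P3 z) hu
    exact my_disj_vanish h1 h2
  have key2' : ∀ w : L, P3 (P w) = 0 := fun w => key2 _ (hB.2.2.1 w)
  have hP3P : P3.comp P = 0 := by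
    ext w
    simpa using key2' w
  have hP2split : ∀ w : L, P2 w = w - P1 w - P3 w := by
    intro w
    have h := split w
    have h2 : P2 w = (P1 w + P2 w + P3 w) - P1 w - P3 w := by abel
    rwa [h] at h2
  -- the key identity P (P2 (P w)) = P w
  have keyP : ∀ w : L, P (P2 (P w)) = P w := by
    intro w
    rw [hP2split (P w), key2' w, sub_zero, map_sub, hidem' w,
      key1 (P1 (P w)) (hP1.2.2.1 _), sub_zero]
  have hQapply : ∀ w : L, Q w = P2 (P (P2 w)) := by
    intro w
    rw [hQ]
    rfl
  -- block identities
  have c3 : Q.comp Q = Q := by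
    ext w
    show Q (Q w) = Q w
    rw [hQapply (Q w), hQapply w, hP2idem (P (P2 w)), keyP (P2 w), ← hQapply w]
  have c4 : (P1.comp (P.comp P2)) = (P1.comp (P.comp P2)).comp Q := by
    ext w
    show P1 (P (P2 w)) = P1 (P (P2 (Q w)))
    rw [hQapply w, hP2idem (P (P2 w)), keyP (P2 w)]
  have c5 : (P2.comp (P.comp P3)) = Q.comp (P2.comp (P.comp P3)) := by
    ext w
    show P2 (P (P3 w)) = Q (P2 (P (P3 w)))
    rw [hQapply (P2 (P (P3 w))), hP2idem (P (P3 w)), keyP (P3 w)]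
  have c6 : (P1.comp (P.comp P3)) = (P1.comp (P.comp P2)).comp (P2.comp (P.comp P3)) := by
    ext w
    show P1 (P (P3 w)) = P1 (P (P2 (P2 (P (P3 w)))))
    rw [hP2idem (P (P3 w)), keyP (P3 w)]
  -- rank
  have crank : Module.finrank ℝ ↥(LinearMap.range (Q : L →ₗ[ℝ] L)) = r := by
    classical
    set pl : L →ₗ[ℝ] L := (P : L →ₗ[ℝ] L) with hpl
    set p2l : L →ₗ[ℝ] L := (P2 : L →ₗ[ℝ] L) with hp2l
    set ql : L →ₗ[ℝ] L := (Q : L →ₗ[ℝ] L) with hql0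
    have hql : ql = p2l ∘ₗ (pl ∘ₗ p2l) := LinearMap.ext fun w => hQapply w
    have hpq : pl = pl ∘ₗ (ql ∘ₗ pl) := by
      refine LinearMap.ext fun w => ?_
      show P w = P (Q (P w))
      rw [hQapply (P w), keyP (P2 (P w)), keyP w]
    haveI : FiniteDimensional ℝ (LinearMap.range pl) := hfd
    have hr1 : LinearMap.range (pl ∘ₗ p2l) ≤ LinearMap.range pl :=
      LinearMap.range_comp_le_range _ _
    haveI f1 : FiniteDimensional ℝ (LinearMap.range (pl ∘ₗ p2l)) :=
      Submodule.finiteDimensional_of_le hr1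
    have e1 : LinearMap.range ql = Submodule.map p2l (LinearMap.range (pl ∘ₗ p2l)) := by
      rw [hql, LinearMap.range_comp]
    haveI f2 : FiniteDimensional ℝ (LinearMap.range ql) := by
      rw [e1]; infer_instance
    have le1 : Module.finrank ℝ (LinearMap.range ql) ≤ Module.finrank ℝ (LinearMap.range pl) := by
      rw [e1]
      exact (Submodule.finrank_map_le p2l _).trans (Submodule.finrank_mono hr1)
    have hr2 : LinearMap.range (ql ∘ₗ pl) ≤ LinearMap.range ql :=
      LinearMap.range_comp_le_range _ _
    haveI f3 : FiniteDimensional ℝ (LinearMap.range (ql ∘ₗ pl)) :=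
      Submodule.finiteDimensional_of_le hr2
    have e2 : LinearMap.range pl = Submodule.map pl (LinearMap.range (ql ∘ₗ pl)) := by
      conv_lhs => rw [hpq]
      rw [LinearMap.range_comp]
    have le2 : Module.finrank ℝ (LinearMap.range pl) ≤ Module.finrank ℝ (LinearMap.range ql) := by
      conv_lhs => rw [e2]
      exact (Submodule.finrank_map_le pl _).trans (Submodule.finrank_mono hr2)
    rw [← hr]
    exact le_antisymm le1 le2
  -- strict positivity of Q on B2
  have cstrict : ∀ x ∈ B2, Q |x| = 0 → x = 0 := by
    intro x hx hQx
    have habs : |x| ∈ B2 := by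
      rw [hB2]
      obtain ⟨hxB, hxd⟩ := (hB2 x).1 hx
      exact ⟨hB.1.1 |x| x (by rw [abs_abs]) hxB, fun y hy => by rw [abs_abs]; exact hxd y hy⟩
    have hP2abs : P2 |x| = |x| := hP2.2.2.2.1 |x| habs
    have hQx' : P2 (P |x|) = 0 := by
      rw [hQapply |x|, hP2abs] at hQx
      exact hQx
    have hsplitPx := split (P |x|)
    rw [hQx', key2' |x|] at hsplitPx
    -- P |x| = P1 (P |x|)
    rw [add_zero, add_zero] at hsplitPx
    have hPx1 : P |x| = P1 (P |x|) := hsplitPx.symm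
    have hPxB1 : P |x| ∈ B1 := hPx1 ▸ hP1.2.2.1 (P |x|)
    have h0 : P (abs (P |x|)) = 0 := (hB1 _).1 hPxB1
    have hPxnonneg : 0 ≤ P |x| := hP _ (abs_nonneg x)
    rw [abs_of_nonneg hPxnonneg, hidem' |x|] at h0
    -- now P |x| = 0, so x ∈ B1
    have hxB1 : x ∈ B1 := (hB1 x).2 h0
    have hdisj : |x| ⊓ |x| = 0 := ((hB2 x).1 hx).2 x hxB1
    rw [inf_idem] at hdisj
    exact my_abs_eq_zero' hdisj
  -- adjoint strict positivity
  have cadj : ∀ φ : L →L[ℝ] ℝ, (∀ x : L, 0 ≤ x → 0 ≤ φ x) → (∀ x : L, φ (Q x) = 0) →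
      ∀ x ∈ B2, φ x = 0 := by
    intro φ hφpos hφQ x hxB2
    have hφmono : ∀ {u v : L}, u ≤ v → φ u ≤ φ v := by
      intro u v huv
      have := hφpos _ (sub_nonneg.2 huv)
      rwa [map_sub, sub_nonneg] at this
    have hfnonneg : ∀ z : L, 0 ≤ φ (P2 |z|) := fun z => hφpos _ (hP2.1 _ (abs_nonneg z))
    -- the null ideal of φ ∘ P2 ∘ abs
    set J : Submodule ℝ L :=
      { carrier := {z : L | φ (P2 |z|) = 0}
        zero_mem' := by simp
        add_mem' := by
          intro a b ha hb
          have h1 : φ (P2 |a + b|) ≤ φ (P2 (|a| + |b|)) :=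
            hφmono (my_op_mono hP2.1 (abs_add_le a b))
          rw [map_add, map_add, ha, hb, add_zero] at h1
          exact le_antisymm h1 (hfnonneg _)
        smul_mem' := by
          intro c z hz
          show φ (P2 |c • z|) = 0
          rw [my_abs_smul c z, map_smul, map_smul, smul_eq_mul]
          rw [show φ (P2 |z|) = 0 from hz, mul_zero] } with hJ
    have hJmem : ∀ z : L, z ∈ J ↔ φ (P2 |z|) = 0 := fun z => Iff.rfl
    have hJideal : ∀ u v : L, |u| ≤ |v| → v ∈ J → u ∈ J := by
      intro u v huv hv
      rw [hJmem] at hv ⊢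
      have := hφmono (my_op_mono hP2.1 huv)
      rw [hv] at this
      exact le_antisymm this (hfnonneg u)
    have hJclosed : IsClosed (J : Set L) := by
      have hcont : Continuous fun z : L => φ (P2 |z|) := by
        have habs : Continuous fun z : L => |z| := continuous_id.sup continuous_neg
        exact φ.continuous.comp (P2.continuous.comp habs)
      have : (J : Set L) = (fun z : L => φ (P2 |z|)) ⁻¹' {0} := rfl
      rw [this]
      exact IsClosed.preimage hcont isClosed_singleton
    -- J is a band
    have hJband : IsBand J := by
      refine ⟨hJideal, ?_⟩
      intro A hne hAJ z hz
      exact my_sup_mem_closed_ideal J hoc hJideal hJclosed A hne hAJ z hz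
    -- B1 ≤ J
    have hP2B1 : ∀ w ∈ B1, P2 w = 0 := by
      intro w hw
      have hu : P2 w ∈ B2 := hP2.2.2.1 w
      have h1 : |P2 w| ⊓ |w| = 0 := ((hB2 (P2 w)).1 hu).2 w hw
      have h2 : |w - P2 w| ⊓ |P2 w| = 0 := hP2.2.2.2.2 w (P2 w) hu
      exact my_disj_vanish h1 h2
    have hB1J : B1 ≤ J := by
      intro z hz
      rw [hJmem]
      have habs : |z| ∈ B1 := by
        rw [hB1, abs_abs]
        exact (hB1 z).1 hz
      rw [hP2B1 |z| habs, map_zero]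
    -- range P ⊆ J
    have hφQ' : ∀ w : L, φ (P2 (P (P2 w))) = 0 := by
      intro w
      have := hφQ w
      rwa [hQapply w] at this
    have hφP2P : ∀ w : L, φ (P2 (P w)) = 0 := by
      intro w
      have hsplit := split w
      have : P2 (P w) = P2 (P (P1 w)) + P2 (P (P2 w)) + P2 (P (P3 w)) := by
        conv_lhs => rw [← hsplit]
        rw [map_add, map_add, map_add, map_add]
      rw [this, map_add, map_add]
      rw [key1 (P1 w) (hP1.2.2.1 w), map_zero, map_zero]
      have hY : P2 (P (P3 w)) = P2 (P (P2 (P2 (P (P3 w))))) := by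
        rw [hP2idem (P (P3 w)), keyP (P3 w)]
      have h3 : φ (P2 (P (P3 w))) = 0 := by
        rw [hY]
        exact hφQ' (P2 (P (P3 w)))
      rw [hφQ' w, h3, add_zero, add_zero]
    have hrangeJ : ∀ w : L, P w ∈ J := by
      intro w
      rw [hJmem]
      have h1 : φ (P2 |P w|) ≤ φ (P2 (P |w|)) := hφmono (my_op_mono hP2.1 (my_abs_op_le hP w))
      rw [hφP2P |w|] at h1
      exact le_antisymm h1 (hfnonneg _)
    have hBJ : B ≤ J := hB.2.2.2 J hJband hB1J hrangeJ
    -- conclude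
    have hxJ : x ∈ J := hBJ ((hB2 x).1 hxB2).1
    rw [hJmem] at hxJ
    have habs : |x| ∈ B2 := by
      rw [hB2]
      obtain ⟨hxB, hxd⟩ := (hB2 x).1 hxB2
      exact ⟨hB.1.1 |x| x (by rw [abs_abs]) hxB, fun y hy => by rw [abs_abs]; exact hxd y hy⟩
    rw [hP2.2.2.2.1 |x| habs] at hxJ
    have h1 : φ x ≤ 0 := by
      have := hφmono (le_abs_self x)
      rwa [hxJ] at this
    have h2 : 0 ≤ φ x := by
      have hneg : -|x| ≤ x := by
        have h : -x ≤ |x| := le_sup_right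
        have h' := neg_le_neg h
        rwa [neg_neg] at h'
      have := hφmono hneg
      rwa [map_neg, hxJ, neg_zero] at this
    exact le_antisymm h1 h2
  exact ⟨hPP1, hP3P, c3, c4, c5, c6, crank, cstrict, cadj⟩
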